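/- Let n ≥ 1, let B ⊆ Fin n, let a : Fin n → Fin n → ℝ be a measurement matrix, and let f : Fin n → ℝ. Then: (1) there exists u* : Fin n → ℝ with u*_i = f_i for all i ∈ B minimizing I(u) over all u with u_i = f_i on B; (2) there exists a dual feasible b* : Fin n → Fin n → ℝ such that I(u*) = ∑_{i ∈ B} (div b*)_i · f_i; and (3) for every u with u_i = f_i on B and every dual feasible b, one has ∑_{i ∈ B} (div b)_i · f_i ≤ I(u). (Strong duality with attainment for the Dirichlet least gradient problem.) -/

import Mathlib

open Finset

/-- Weighted ℓ¹ energy `I(u) = (1/2) ∑_{i,j} a_{ij} |u_i - u_j|`. -/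
noncomputable def lgEnergy {n : ℕ} (a : Fin n → Fin n → ℝ) (u : Fin n → ℝ) : ℝ :=
  (1 / 2) * ∑ i, ∑ j, a i j * |u i - u j|

/-- Divergence of a matrix: `(div b)_i = ∑_j (b_{ji} - b_{ij})`. -/
noncomputable def dvg {n : ℕ} (b : Fin n → Fin n → ℝ) (i : Fin n) : ℝ :=
  ∑ j, (b j i - b i j)

lemma lgEnergy_alt {n : ℕ} (a : Fin n → Fin n → ℝ) (u : Fin n → ℝ) :
    lgEnergy a u = ∑ i, ∑ j, (a i j / 2) * |u j - u i| := by
  rw [lgEnergy, Finset.mul_sum]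
  refine Finset.sum_congr rfl fun i _ => ?_
  rw [Finset.mul_sum]
  refine Finset.sum_congr rfl fun j _ => ?_
  rw [abs_sub_comm]; ring

lemma pairing_eq {n : ℕ} (b : Fin n → Fin n → ℝ) (u : Fin n → ℝ) :
    ∑ i, dvg b i * u i = ∑ i, ∑ j, b i j * (u j - u i) := by
  calc ∑ i, dvg b i * u i = ∑ i, ∑ j, (b j i * u i - b i j * u i) := by
        simp [dvg, Finset.sum_mul, sub_mul]
    _ = (∑ i, ∑ j, b j i * u i) - ∑ i, ∑ j, b i j * u i := by
        rw [← Finset.sum_sub_distrib]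
        exact Finset.sum_congr rfl fun i _ => by rw [Finset.sum_sub_distrib]
    _ = (∑ i, ∑ j, b i j * u j) - ∑ i, ∑ j, b i j * u i := by rw [Finset.sum_comm]
    _ = ∑ i, ∑ j, b i j * (u j - u i) := by
        rw [← Finset.sum_sub_distrib]
        refine Finset.sum_congr rfl fun i _ => ?_
        rw [← Finset.sum_sub_distrib]
        exact Finset.sum_congr rfl fun j _ => by ring

lemma lgEnergy_nonneg {n : ℕ} {a : Fin n → Fin n → ℝ} (ha : ∀ i j, 0 ≤ a i j)
    (u : Fin n → ℝ) : 0 ≤ lgEnergy a u := by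
  rw [lgEnergy]
  have : (0:ℝ) ≤ ∑ i, ∑ j, a i j * |u i - u j| :=
    Finset.sum_nonneg fun i _ => Finset.sum_nonneg fun j _ =>
      mul_nonneg (ha i j) (abs_nonneg _)
  linarith

lemma pairing_le {n : ℕ} {a b : Fin n → Fin n → ℝ} (hb : ∀ i j, |b i j| ≤ a i j / 2)
    (u : Fin n → ℝ) : ∑ i, dvg b i * u i ≤ lgEnergy a u := by
  rw [pairing_eq, lgEnergy_alt]
  refine Finset.sum_le_sum fun i _ => Finset.sum_le_sum fun j _ => ?_
  calc b i j * (u j - u i) ≤ |b i j * (u j - u i)| := le_abs_self _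
    _ = |b i j| * |u j - u i| := abs_mul _ _
    _ ≤ (a i j / 2) * |u j - u i| := by
        exact mul_le_mul_of_nonneg_right (hb i j) (abs_nonneg _)

lemma pairing_attain {n : ℕ} {a : Fin n → Fin n → ℝ} (ha : ∀ i j, 0 ≤ a i j)
    (u : Fin n → ℝ) : ∃ b : Fin n → Fin n → ℝ,
      (∀ i j, |b i j| ≤ a i j / 2) ∧ ∑ i, dvg b i * u i = lgEnergy a u := by
  refine ⟨fun i j => if u i ≤ u j then a i j / 2 else -(a i j / 2), fun i j => ?_, ?_⟩
  · simp only
    split_ifs <;> simp [abs_of_nonneg, abs_neg, div_nonneg (ha i j) (by norm_num : (0:ℝ) ≤ 2)]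
  · rw [pairing_eq, lgEnergy_alt]
    refine Finset.sum_congr rfl fun i _ => Finset.sum_congr rfl fun j _ => ?_
    split_ifs with h
    · rw [abs_of_nonneg (by linarith : (0:ℝ) ≤ u j - u i)]
    · rw [abs_of_neg (by linarith : u j - u i < 0)]; ring

lemma lgEnergy_add_le {n : ℕ} {a : Fin n → Fin n → ℝ} (ha : ∀ i j, 0 ≤ a i j)
    (u v : Fin n → ℝ) : lgEnergy a (u + v) ≤ lgEnergy a u + lgEnergy a v := by
  simp only [lgEnergy]
  have h : ∀ i j : Fin n, a i j * |(u + v) i - (u + v) j| ≤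
      a i j * |u i - u j| + a i j * |v i - v j| := by
    intro i j
    rw [← mul_add]
    refine mul_le_mul_of_nonneg_left ?_ (ha i j)
    have : (u + v) i - (u + v) j = (u i - u j) + (v i - v j) := by simp; ring
    rw [this]; exact abs_add_le _ _
  have h2 : ∑ i, ∑ j, a i j * |(u + v) i - (u + v) j| ≤
      (∑ i, ∑ j, a i j * |u i - u j|) + ∑ i, ∑ j, a i j * |v i - v j| := by
    rw [← Finset.sum_add_distrib]
    refine Finset.sum_le_sum fun i _ => ?_
    rw [← Finset.sum_add_distrib]
    exact Finset.sum_le_sum fun j _ => h i j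
  linarith

lemma lgEnergy_smul {n : ℕ} (a : Fin n → Fin n → ℝ) {t : ℝ} (ht : 0 ≤ t)
    (u : Fin n → ℝ) : lgEnergy a (t • u) = t * lgEnergy a u := by
  simp only [lgEnergy]
  have h : ∑ i, ∑ j, a i j * |(t • u) i - (t • u) j|
      = t * ∑ i, ∑ j, a i j * |u i - u j| := by
    rw [Finset.mul_sum]
    refine Finset.sum_congr rfl fun i _ => ?_
    rw [Finset.mul_sum]
    refine Finset.sum_congr rfl fun j _ => ?_
    have : (t • u) i - (t • u) j = t * (u i - u j) := by simp; ring
    rw [this, abs_mul, abs_of_nonneg ht]; ring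
  rw [h]; ring

lemma clamp_lip (M x y : ℝ) :
    |max (-M) (min x M) - max (-M) (min y M)| ≤ |x - y| := by
  rw [max_comm (-M) (min x M), max_comm (-M) (min y M)]
  refine (abs_max_sub_max_le_abs _ _ _).trans ?_
  refine (abs_min_sub_min_le_max x M y M).trans ?_
  simp [abs_nonneg]

lemma exists_min {n : ℕ} {a : Fin n → Fin n → ℝ} (ha : ∀ i j, 0 ≤ a i j)
    (B : Finset (Fin n)) (w : Fin n → ℝ) :
    ∃ u : Fin n → ℝ, (∀ i ∈ B, u i = w i) ∧
      ∀ v : Fin n → ℝ, (∀ i ∈ B, v i = w i) → lgEnergy a u ≤ lgEnergy a v := by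
  classical
  set M : ℝ := ∑ i, |w i| with hM
  have hM0 : 0 ≤ M := Finset.sum_nonneg fun i _ => abs_nonneg _
  have hMi : ∀ i, |w i| ≤ M := fun i =>
    Finset.single_le_sum (f := fun i => |w i|) (fun i _ => abs_nonneg _) (Finset.mem_univ i)
  set S : Set (Fin n → ℝ) :=
    {u | (∀ i, u i ∈ Set.Icc (-M) M) ∧ ∀ i ∈ B, u i = w i} with hS
  have hcomp : IsCompact S := by
    have h1 : IsCompact {u : Fin n → ℝ | ∀ i, u i ∈ Set.Icc (-M) M} := by
      have : {u : Fin n → ℝ | ∀ i, u i ∈ Set.Icc (-M) M}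
          = Set.univ.pi fun _ => Set.Icc (-M) M := by
        ext u; simp only [Set.mem_setOf_eq, Set.mem_univ_pi]
      rw [this]
      exact isCompact_univ_pi fun i => isCompact_Icc
    have h2 : IsClosed {u : Fin n → ℝ | ∀ i ∈ B, u i = w i} := by
      have : {u : Fin n → ℝ | ∀ i ∈ B, u i = w i}
          = ⋂ i ∈ B, {u : Fin n → ℝ | u i = w i} := by ext u; simp
      rw [this]
      exact isClosed_biInter fun i _ => isClosed_eq (continuous_apply i) continuous_const
    have : S = {u : Fin n → ℝ | ∀ i, u i ∈ Set.Icc (-M) M}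
        ∩ {u | ∀ i ∈ B, u i = w i} := by
      ext u; simp only [hS, Set.mem_setOf_eq, Set.mem_inter_iff]
    rw [this]
    exact h1.inter_right h2
  have hne : S.Nonempty := by
    refine ⟨fun i => if i ∈ B then w i else 0, fun i => ?_, fun i hi => by simp [hi]⟩
    show (if i ∈ B then w i else 0) ∈ Set.Icc (-M) M
    split_ifs with h
    · exact ⟨neg_le_of_abs_le (hMi i), le_of_abs_le (hMi i)⟩
    · exact ⟨neg_nonpos_of_nonneg hM0, hM0⟩
  have hcont : ContinuousOn (lgEnergy a) S := by
    refine Continuous.continuousOn ?_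
    unfold lgEnergy
    refine continuous_const.mul ?_
    refine continuous_finset_sum _ fun i _ => continuous_finset_sum _ fun j _ => ?_
    exact continuous_const.mul ((continuous_apply i).sub (continuous_apply j)).abs
  obtain ⟨u, huS, humin⟩ := hcomp.exists_isMinOn hne hcont
  refine ⟨u, huS.2, fun v hv => ?_⟩
  set v' : Fin n → ℝ := fun i => max (-M) (min (v i) M) with hv'
  have hv'S : v' ∈ S := by
    constructor
    · intro i
      exact ⟨le_max_left _ _, max_le (by linarith) (min_le_right _ _)⟩
    · intro i hi
      have h1 : |w i| ≤ M := hMi i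
      have h2 : v i = w i := hv i hi
      simp only [hv', h2]
      rw [min_eq_left (le_of_abs_le h1), max_eq_right (neg_le_of_abs_le h1)]
  refine (humin hv'S).trans ?_
  unfold lgEnergy
  refine mul_le_mul_of_nonneg_left ?_ (by norm_num : (0:ℝ) ≤ 1/2)
  refine Finset.sum_le_sum fun i _ => Finset.sum_le_sum fun j _ => ?_
  exact mul_le_mul_of_nonneg_left (clamp_lip M (v i) (v j)) (ha i j)

lemma dual_rep {n : ℕ} {a : Fin n → Fin n → ℝ} (ha : ∀ i j, 0 ≤ a i j)
    (c : Fin n → ℝ) (hc : ∀ u : Fin n → ℝ, ∑ i, c i * u i ≤ lgEnergy a u) :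
    ∃ b : Fin n → Fin n → ℝ, (∀ i j, |b i j| ≤ a i j / 2) ∧ ∀ i, dvg b i = c i := by
  classical
  set E := EuclideanSpace ℝ (Fin n) with hE
  let e : (Fin n → ℝ) ≃ₗ[ℝ] E := (WithLp.linearEquiv 2 ℝ (Fin n → ℝ)).symm
  have he : ∀ (x : Fin n → ℝ) (i : Fin n), (e x) i = x i := fun x i => rfl
  have dvg_add : ∀ x y : Fin n → Fin n → ℝ, dvg (x + y) = dvg x + dvg y := by
    intro x y; funext i
    simp only [dvg, Pi.add_apply, ← Finset.sum_add_distrib]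
    exact Finset.sum_congr rfl fun j _ => by ring
  have dvg_smul : ∀ (t : ℝ) (x : Fin n → Fin n → ℝ), dvg (t • x) = t • dvg x := by
    intro t x; funext i
    simp only [dvg, Pi.smul_apply, smul_eq_mul, Finset.mul_sum]
    exact Finset.sum_congr rfl fun j _ => by ring
  let T : (Fin n → Fin n → ℝ) →ₗ[ℝ] E :=
    { toFun := fun b => e (dvg b)
      map_add' := fun x y => by
        show e (dvg (x + y)) = e (dvg x) + e (dvg y)
        rw [dvg_add, map_add]
      map_smul' := fun t x => by
        show e (dvg (t • x)) = t • e (dvg x)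
        rw [dvg_smul, map_smul] }
  set box : Set (Fin n → Fin n → ℝ) :=
    Set.univ.pi fun i => Set.univ.pi fun j => Set.Icc (-(a i j / 2)) (a i j / 2) with hbox
  have hmem : ∀ b : Fin n → Fin n → ℝ, b ∈ box ↔ ∀ i j, |b i j| ≤ a i j / 2 := by
    intro b
    simp only [hbox, Set.mem_univ_pi, Set.mem_Icc]
    constructor
    · intro h i j; exact abs_le.mpr (h i j)
    · intro h i j; exact abs_le.mp (h i j)
  have hT : ∀ (b : Fin n → Fin n → ℝ) (i : Fin n), (T b) i = dvg b i := fun b i => rfl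
  set D : Set E := T '' box with hD
  have hDconv : Convex ℝ D :=
    ((convex_pi fun i _ => convex_pi fun j _ => convex_Icc _ _)).linear_image T
  have hDcomp : IsCompact D :=
    ((isCompact_univ_pi fun i => isCompact_univ_pi fun j => isCompact_Icc)).image
      T.continuous_of_finiteDimensional
  by_cases hcD : e c ∈ D
  · obtain ⟨b, hb, htb⟩ := hcD
    exact ⟨b, (hmem b).mp hb, fun i => by
      have := congrArg (fun x : E => x i) htb
      simpa [he, hT] using this⟩
  · exfalso
    obtain ⟨ℓ, r, hsep1, hsep2⟩ :=
      geometric_hahn_banach_closed_point hDconv hDcomp.isClosed hcD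
    set w : E := (InnerProductSpace.toDual ℝ E).symm ℓ with hw
    have hl : ∀ x : E, ℓ x = ∑ i, w i * x i := by
      intro x
      have h := InnerProductSpace.toDual_symm_apply (𝕜 := ℝ) (E := E) (x := x) (y := ℓ)
      rw [← hw] at h
      rw [← h, PiLp.inner_apply]
      exact Finset.sum_congr rfl fun i _ => by
        simp [RCLike.inner_apply, starRingEnd_apply]; ring
    set w0 : Fin n → ℝ := fun i => w i with hw0
    obtain ⟨bm, hbm, hbme⟩ := pairing_attain ha w0
    have h1 : ℓ (T bm) < r := hsep1 _ ⟨bm, (hmem bm).mpr hbm, rfl⟩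
    have h2 : ℓ (T bm) = lgEnergy a w0 := by
      rw [hl, ← hbme]
      exact Finset.sum_congr rfl fun i _ => by rw [hT]; ring
    have h3 : ℓ (e c) = ∑ i, c i * w0 i := by
      rw [hl]
      exact Finset.sum_congr rfl fun i _ => by rw [he]; ring
    have h4 := hc w0
    rw [← h3] at h4
    linarith [hsep2, h1, h2, h4]

/-- Strong duality with attainment for the Dirichlet least gradient problem. -/
theorem dirichlet_strong_duality
    (n : ℕ) (hn : 1 ≤ n) (B : Finset (Fin n))
    (a : Fin n → Fin n → ℝ)
    (hasymm : ∀ i j, a i j = a j i) (hanonneg : ∀ i j, 0 ≤ a i j)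
    (hadiag : ∀ i, a i i = 0)
    (f : Fin n → ℝ) :
    ∃ ustar : Fin n → ℝ,
      (∀ i ∈ B, ustar i = f i) ∧
      (∀ u : Fin n → ℝ, (∀ i ∈ B, u i = f i) → lgEnergy a ustar ≤ lgEnergy a u) ∧
      (∃ bstar : Fin n → Fin n → ℝ,
        (∀ i j, |bstar i j| ≤ a i j / 2) ∧
        (∀ i, i ∉ B → dvg bstar i = 0) ∧
        lgEnergy a ustar = ∑ i ∈ B, dvg bstar i * f i) ∧
      (∀ u : Fin n → ℝ, (∀ i ∈ B, u i = f i) →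
        ∀ b : Fin n → Fin n → ℝ,
          (∀ i j, |b i j| ≤ a i j / 2) → (∀ i, i ∉ B → dvg b i = 0) →
          ∑ i ∈ B, dvg b i * f i ≤ lgEnergy a u) := by
  classical
  -- minimizer selection
  have exm := fun w => exists_min hanonneg B w
  set msel : (Fin n → ℝ) → (Fin n → ℝ) := fun w => (exm w).choose with hmsel
  have hsel1 : ∀ w, ∀ i ∈ B, msel w i = w i := fun w => (exm w).choose_spec.1
  have hsel2 : ∀ w v, (∀ i ∈ B, v i = w i) → lgEnergy a (msel w) ≤ lgEnergy a v :=
    fun w => (exm w).choose_spec.2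
  set N : (Fin n → ℝ) → ℝ := fun w => lgEnergy a (msel w) with hN
  have N_nonneg : ∀ w, 0 ≤ N w := fun w => lgEnergy_nonneg hanonneg _
  have lgE_zero : lgEnergy a (0 : Fin n → ℝ) = 0 := by simp [lgEnergy]
  have N_bzero : ∀ w, (∀ i ∈ B, w i = 0) → N w = 0 := by
    intro w hw
    refine le_antisymm ?_ (N_nonneg w)
    have := hsel2 w 0 (fun i hi => by simp [(hw i hi)])
    rwa [lgE_zero] at this
  have N_add : ∀ w1 w2, N (w1 + w2) ≤ N w1 + N w2 := by
    intro w1 w2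
    refine le_trans (hsel2 _ (msel w1 + msel w2) fun i hi => by
      simp [hsel1 w1 i hi, hsel1 w2 i hi]) ?_
    exact lgEnergy_add_le hanonneg _ _
  have N_hom : ∀ t : ℝ, 0 < t → ∀ w, N (t • w) = t * N w := by
    intro t ht w
    refine le_antisymm ?_ ?_
    · have h1 := hsel2 (t • w) (t • msel w) (fun i hi => by
        simp [hsel1 w i hi])
      rwa [lgEnergy_smul a ht.le] at h1
    · have h1 := hsel2 w (t⁻¹ • msel (t • w)) (fun i hi => by
        have := hsel1 (t • w) i hi
        simp only [Pi.smul_apply, smul_eq_mul] at this ⊢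
        rw [this]; field_simp)
      rw [lgEnergy_smul a (by positivity : (0:ℝ) ≤ t⁻¹)] at h1
      calc t * N w ≤ t * (t⁻¹ * N (t • w)) := by
            exact mul_le_mul_of_nonneg_left h1 ht.le
        _ = N (t • w) := by field_simp
  -- Hahn-Banach: a linear functional g ≤ N with g f = N f
  have hg : ∃ g : (Fin n → ℝ) →ₗ[ℝ] ℝ, (∀ x, g x ≤ N x) ∧ g f = N f := by
    by_cases hf0 : f = 0
    · refine ⟨0, fun x => N_nonneg x, ?_⟩
      rw [hf0]
      simp only [map_zero]
      exact (N_bzero 0 (fun i _ => rfl)).symm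
    · set pm : (Fin n → ℝ) →ₗ.[ℝ] ℝ := LinearPMap.mkSpanSingleton f (N f) hf0 with hpm
      have hfle : ∀ x : pm.domain, pm x ≤ N x := by
        rintro ⟨x, hx⟩
        have hx' : x ∈ Submodule.span ℝ {f} := hx
        obtain ⟨t, rfl⟩ := Submodule.mem_span_singleton.mp hx'
        rw [show pm ⟨t • f, hx⟩ = t • N f from LinearPMap.mkSpanSingleton'_apply _ _ _ t _]
        simp only [smul_eq_mul]
        rcases lt_trichotomy t 0 with h | h | h
        · have h1 : N (t • f + (-t) • f) = 0 := by
            rw [← add_smul]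
            simp [N_bzero 0 (fun i _ => rfl)]
          have h2 := N_add (t • f) ((-t) • f)
          rw [h1, N_hom (-t) (by linarith) f] at h2
          linarith
        · subst h; simp [N_bzero 0 (fun i _ => rfl)]
        · rw [N_hom t h f]
      obtain ⟨g, hg1, hg2⟩ := exists_extension_of_le_sublinear pm N N_hom N_add hfle
      refine ⟨g, hg2, ?_⟩
      have := hg1 ⟨f, Submodule.mem_span_singleton_self f⟩
      rw [this, LinearPMap.mkSpanSingleton_apply]
  obtain ⟨g, hgle, hgf⟩ := hg
  -- coefficients
  set c : Fin n → ℝ := fun i => g (fun j => if i = j then 1 else 0) with hc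
  have hgrep : ∀ u : Fin n → ℝ, g u = ∑ i, u i * c i := fun u =>
    LinearMap.pi_apply_eq_sum_univ g u
  have hNleI : ∀ u : Fin n → ℝ, N u ≤ lgEnergy a u := fun u =>
    hsel2 u u (fun i _ => rfl)
  have hczero : ∀ i, i ∉ B → c i = 0 := by
    intro i hi
    have he0 : ∀ i' ∈ B, (fun j => if i = j then (1:ℝ) else 0) i' = 0 := by
      intro i' hi'
      have : i ≠ i' := fun h => hi (h ▸ hi')
      simp [this]
    have h1 : g (fun j => if i = j then (1:ℝ) else 0) ≤ 0 := by
      have := hgle (fun j => if i = j then (1:ℝ) else 0)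
      rwa [N_bzero _ he0] at this
    have h2 : g (-(fun j => if i = j then (1:ℝ) else 0)) ≤ 0 := by
      have := hgle (-(fun j => if i = j then (1:ℝ) else 0))
      rwa [N_bzero _ (fun i' hi' => by
        rw [Pi.neg_apply]
        show (-if i = i' then (1:ℝ) else 0) = 0
        rw [if_neg (fun h : i = i' => hi (h ▸ hi')), neg_zero])] at this
    rw [map_neg] at h2
    exact le_antisymm h1 (by linarith)
  have hcle : ∀ u : Fin n → ℝ, ∑ i, c i * u i ≤ lgEnergy a u := by
    intro u
    have : ∑ i, c i * u i = g u := by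
      rw [hgrep]; exact Finset.sum_congr rfl fun i _ => by ring
    rw [this]
    exact (hgle u).trans (hNleI u)
  obtain ⟨bstar, hbs1, hbs2⟩ := dual_rep hanonneg c hcle
  refine ⟨msel f, hsel1 f, fun u hu => hsel2 f u hu, ⟨bstar, hbs1, ?_, ?_⟩, ?_⟩
  · intro i hi; rw [hbs2 i]; exact hczero i hi
  · -- lgEnergy a (msel f) = ∑ i in B, dvg bstar i * f i
    have h1 : lgEnergy a (msel f) = g f := hgf.symm
    rw [h1, hgrep]
    rw [← Finset.sum_subset (Finset.subset_univ B) (fun i _ hi => by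
      rw [hczero i hi, mul_zero])]
    exact Finset.sum_congr rfl fun i _ => by rw [hbs2 i]; ring
  · -- weak duality
    intro u hu b hb1 hb2
    have h1 : ∑ i ∈ B, dvg b i * f i = ∑ i ∈ B, dvg b i * u i :=
      Finset.sum_congr rfl fun i hi => by rw [hu i hi]
    have h2 : ∑ i ∈ B, dvg b i * u i = ∑ i, dvg b i * u i :=
      Finset.sum_subset (Finset.subset_univ B) (fun i _ hi => by rw [hb2 i hi, zero_mul])
    rw [h1, h2]
    exact pairing_le hb1 u
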